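/- Let φ be a CNF formula with clause set F = {c_1, …, c_m} (each clause containing at most three literals) over variables X = {x_1, …, x_n}, such that every literal appears in exactly two clauses, and let L = X ∪ X̄ be the set of literals. Consider the ranking profile over candidate set C = {d, w} ∪ F ∪ L consisting of: 100 voters with ranking d ≻ ⋯; 99 voters with ranking w ≻ d ≻ ⋯; for each j ∈ [m], 98 voters with ranking c_j ≻ w ≻ d ≻ ⋯; for each literal ℓ ∈ L, 60 voters with ranking ℓ ≻ ℓ̄ ≻ w ≻ d ≻ ⋯; and for each literal ℓ ∈ L and each clause c_j containing ℓ, 2 voters with ranking ℓ ≻ c_j ≻ w ≻ d ≻ ⋯; where in each case ⋯ stands for an arbitrary completion with the remaining candidates. Then d is ranked first in some ranking selected by Sequential-Plurality-Loser (STV) on this profile if and only if φ is satisfiable. -/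

import Mathlib

open Finset

/-- A scoring system: for each number `m` of candidates, `s m i` is the score awarded
to the candidate in (1-indexed) position `i`. -/
abbrev ScoringSystem : Type := ℕ → ℕ → ℝ

variable {α : Type*}

/-- A ranking of the finite candidate set `C`: a duplicate-free list consisting of
exactly the candidates of `C`, earlier in the list meaning more preferred. -/
def IsRanking [DecidableEq α] (C : Finset α) (r : List α) : Prop :=
  r.Nodup ∧ r.toFinset = C

/-- A ranking profile over `C`: a finite list of rankings of `C`. -/
def IsProfile [DecidableEq α] (C : Finset α) (P : List (List α)) : Prop :=
  ∀ r ∈ P, IsRanking C r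

/-- The (1-indexed) position of candidate `c` in ranking `r`. -/
def rpos [DecidableEq α] (r : List α) (c : α) : ℕ :=
  r.idxOf c + 1

/-- The `s`-score of candidate `c` in the profile `P` over candidate set `C`. -/
def scoreOf [DecidableEq α] (s : ScoringSystem) (C : Finset α)
    (P : List (List α)) (c : α) : ℝ :=
  (P.map fun r => s C.card (rpos r c)).sum

/-- `c` is an `s`-winner of `P` (a candidate of maximum `s`-score). -/
def IsWinner [DecidableEq α] (s : ScoringSystem) (C : Finset α)
    (P : List (List α)) (c : α) : Prop :=
  c ∈ C ∧ ∀ d ∈ C, scoreOf s C P d ≤ scoreOf s C P c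

/-- `c` is an `s`-loser of `P` (a candidate of minimum `s`-score). -/
def IsLoser [DecidableEq α] (s : ScoringSystem) (C : Finset α)
    (P : List (List α)) (c : α) : Prop :=
  c ∈ C ∧ ∀ d ∈ C, scoreOf s C P c ≤ scoreOf s C P d

/-- Restriction of a profile to the candidate subset `C'`. -/
def restrictProfile [DecidableEq α] (C' : Finset α) (P : List (List α)) :
    List (List α) :=
  P.map fun r => r.filter (fun x => decide (x ∈ C'))

/-- Auxiliary recursion for Sequential-`s`-Winner, consuming the ranking from the top. -/
def SeqWinnerSel [DecidableEq α] (s : ScoringSystem) :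
    List α → Finset α → List (List α) → Prop
  | [], C, _ => C = ∅
  | c :: rest, C, P =>
      IsWinner s C P c ∧
        SeqWinnerSel s rest (C.erase c) (restrictProfile (C.erase c) P)

/-- `SeqWinner s C P r` means that the ranking `r` belongs to
`Sequential-s-Winner(P)` for the profile `P` over candidate set `C`. -/
def SeqWinner [DecidableEq α] (s : ScoringSystem) (C : Finset α)
    (P : List (List α)) (r : List α) : Prop :=
  SeqWinnerSel s r C P

/-- Auxiliary recursion for Sequential-`s`-Loser, consuming the ranking from the bottom. -/
def SeqLoserSel [DecidableEq α] (s : ScoringSystem) :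
    List α → Finset α → List (List α) → Prop
  | [], C, _ => C = ∅
  | c :: rest, C, P =>
      IsLoser s C P c ∧
        SeqLoserSel s rest (C.erase c) (restrictProfile (C.erase c) P)

/-- `SeqLoser s C P r` means that the ranking `r` belongs to
`Sequential-s-Loser(P)` for the profile `P` over candidate set `C`. -/
def SeqLoser [DecidableEq α] (s : ScoringSystem) (C : Finset α)
    (P : List (List α)) (r : List α) : Prop :=
  SeqLoserSel s r.reverse C P

/-- The Plurality scoring system `(1,0,…,0)`. -/
def pluralityS : ScoringSystem := fun _ i => if i = 1 then (1 : ℝ) else 0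

section Machinery

variable {β : Type*} {ι : Type*} [DecidableEq ι]

lemma countP_or_disjoint (l : List β) (p q : β → Bool)
    (h : ∀ a ∈ l, ¬(p a = true ∧ q a = true)) :
    l.countP (fun a => p a || q a) = l.countP p + l.countP q := by
  induction l with
  | nil => simp
  | cons a l ih =>
    simp only [List.countP_cons]
    rw [ih (fun b hb => h b (List.mem_cons_of_mem _ hb))]
    have := h a List.mem_cons_self
    cases hp : p a <;> cases hq : q a <;> simp_all <;> omega

lemma countP_exists_finset (T : Finset ι) (f : ι → β → Bool) (l : List β)
    (h : ∀ a ∈ l, ∀ i ∈ T, ∀ j ∈ T, f i a = true → f j a = true → i = j) :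
    l.countP (fun a => decide (∃ i ∈ T, f i a = true)) = ∑ i ∈ T, l.countP (f i) := by
  induction T using Finset.induction with
  | empty => simp
  | @insert j T hj ih =>
    rw [Finset.sum_insert hj]
    have hcongr : l.countP (fun a => decide (∃ i ∈ insert j T, f i a = true))
        = l.countP (fun a => f j a || decide (∃ i ∈ T, f i a = true)) := by
      apply List.countP_congr
      intro a _
      simp [Finset.mem_insert, or_and_right, exists_or]
    rw [hcongr, countP_or_disjoint, ih]
    · intro a ha i hi i' hi' hfi hfi'
      exact h a ha i (Finset.mem_insert_of_mem hi) i' (Finset.mem_insert_of_mem hi') hfi hfi'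
    · intro a ha ⟨hfa, hex⟩
      obtain ⟨i, hi, hfi⟩ := by simpa using hex
      exact hj (h a ha j (Finset.mem_insert_self _ _) i (Finset.mem_insert_of_mem hi) hfa hfi ▸ hi)

end Machinery
set_option linter.unusedSectionVars false

section Bridge

variable {α : Type*} [DecidableEq α]

/-- The top (most-preferred remaining candidate) of ranking `r` within `C'`. -/
def topC (C' : Finset α) (r : List α) : Option α :=
  (r.filter (fun x => decide (x ∈ C'))).head?

lemma topC_cons (C' : Finset α) (a : α) (l : List α) :
    topC C' (a :: l) = if a ∈ C' then some a else topC C' l := by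
  by_cases h : a ∈ C' <;> simp [topC, List.filter_cons, h]

lemma take1_shape {r : List α} {a : α} (h : r.take 1 = [a]) : ∃ t, r = a :: t := by
  cases r with
  | nil => simp at h
  | cons b t => simp_all

lemma take2_shape {r : List α} {a b : α} (h : r.take 2 = [a, b]) : ∃ t, r = a :: b :: t := by
  cases r with
  | nil => simp at h
  | cons x t =>
    cases t with
    | nil => simp_all
    | cons y t => simp_all

lemma take3_shape {r : List α} {a b c : α} (h : r.take 3 = [a, b, c]) :
    ∃ t, r = a :: b :: c :: t := by
  cases r with
  | nil => simp at h
  | cons x t =>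
    cases t with
    | nil => simp_all
    | cons y t =>
      cases t with
      | nil => simp_all
      | cons z t => simp_all

lemma take4_shape {r : List α} {a b c e : α} (h : r.take 4 = [a, b, c, e]) :
    ∃ t, r = a :: b :: c :: e :: t := by
  cases r with
  | nil => simp at h
  | cons x t =>
    cases t with
    | nil => simp_all
    | cons y t =>
      cases t with
      | nil => simp_all
      | cons z t =>
        cases t with
        | nil => simp_all
        | cons u t => simp_all

lemma plur_head (k : ℕ) (l : List α) (hl : l ≠ []) (c : α) :
    pluralityS k (rpos l c) = if l.head? = some c then 1 else 0 := by
  cases l with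
  | nil => exact absurd rfl hl
  | cons a l =>
    by_cases hac : a = c
    · subst hac
      simp [pluralityS, rpos, List.idxOf_cons_self]
    · have : List.idxOf c (a :: l) = List.idxOf c l + 1 := by
        simp [List.idxOf_cons, hac]
      simp [pluralityS, rpos, this, hac]

lemma filter_ne_nil_of_mem {C' : Finset α} {r : List α} {x : α} (hx : x ∈ r) (hx' : x ∈ C') :
    r.filter (fun y => decide (y ∈ C')) ≠ [] := by
  intro h
  have : x ∈ r.filter (fun y => decide (y ∈ C')) := List.mem_filter.2 ⟨hx, by simpa⟩
  simp [h] at this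

lemma score_eq_cnt (C' : Finset α) (P : List (List α))
    (hne : ∀ r ∈ P, r.filter (fun x => decide (x ∈ C')) ≠ []) (c : α) :
    scoreOf pluralityS C' (restrictProfile C' P) c
      = (P.countP (fun r => decide (topC C' r = some c)) : ℝ) := by
  induction P with
  | nil => simp [scoreOf, restrictProfile]
  | cons r P ih =>
    have hr := hne r List.mem_cons_self
    have ih' := ih (fun r hr => hne r (List.mem_cons_of_mem _ hr))
    simp only [scoreOf, restrictProfile, List.map_cons, List.sum_cons, List.countP_cons] at *
    rw [ih', plur_head _ _ hr]
    have hrw : (List.filter (fun x => decide (x ∈ C')) r).head? = topC C' r := rfl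
    rw [hrw]
    by_cases h : topC C' r = some c
    · simp [h, add_comm]
    · simp [h]

end Bridge
section RunMachinery

variable {α : Type*} [DecidableEq α]

lemma restrict_restrict (C'' C' : Finset α) (h : C'' ⊆ C') (P : List (List α)) :
    restrictProfile C'' (restrictProfile C' P) = restrictProfile C'' P := by
  simp only [restrictProfile, List.map_map]
  apply List.map_congr_left
  intro r _
  simp only [Function.comp]
  rw [List.filter_filter]
  apply List.filter_congr
  intro x _
  by_cases hx : x ∈ C''
  · simp [hx, h hx]
  · simp [hx]

lemma restrict_self {C : Finset α} {P : List (List α)} (hP : IsProfile C P) :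
    restrictProfile C P = P := by
  simp only [restrictProfile]
  conv_rhs => rw [← List.map_id P]
  apply List.map_congr_left
  intro r hr
  simp only [id]
  apply List.filter_eq_self.2
  intro x hx
  have : x ∈ r.toFinset := List.mem_toFinset.2 hx
  rw [(hP r hr).2] at this
  simpa using this

/-- `Run P C' e`: the elimination sequence `e` is a valid sequential-plurality-loser
run starting from candidate set `C'` (with underlying full profile `P`). -/
def Run (P : List (List α)) (C' : Finset α) (e : List α) : Prop :=
  SeqLoserSel pluralityS e C' (restrictProfile C' P)

lemma run_cons {P : List (List α)} {C' : Finset α} {c : α} {e : List α} :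
    Run P C' (c :: e) ↔
      IsLoser pluralityS C' (restrictProfile C' P) c ∧ Run P (C'.erase c) e := by
  simp only [Run, SeqLoserSel]
  rw [restrict_restrict _ _ (Finset.erase_subset _ _)]

lemma run_append {P : List (List α)} {e₁ : List α} {C' : Finset α} {e₂ : List α}
    (h : Run P C' (e₁ ++ e₂)) : Run P (C' \ e₁.toFinset) e₂ := by
  induction e₁ generalizing C' with
  | nil => simpa using h
  | cons a e₁ ih =>
    rw [List.cons_append, run_cons] at h
    have := ih h.2
    have hset : C'.erase a \ e₁.toFinset = C' \ (a :: e₁).toFinset := by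
      ext x
      simp [Finset.mem_sdiff, Finset.mem_erase, List.toFinset_cons]
      tauto
    rwa [hset] at this

lemma run_nodup_toFinset {P : List (List α)} {C' : Finset α} {e : List α}
    (h : Run P C' e) : e.Nodup ∧ e.toFinset = C' := by
  induction e generalizing C' with
  | nil => simp only [Run, SeqLoserSel] at h; simp [h]
  | cons c e ih =>
    rw [run_cons] at h
    obtain ⟨hl, hrun⟩ := h
    obtain ⟨hnd, hfin⟩ := ih hrun
    have hc : c ∈ C' := hl.1
    have hce : c ∉ e := by
      intro hc'
      have : c ∈ C'.erase c := hfin ▸ List.mem_toFinset.2 hc'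
      simp at this
    refine ⟨List.nodup_cons.2 ⟨hce, hnd⟩, ?_⟩
    rw [List.toFinset_cons, hfin, Finset.insert_erase hc]

lemma isLoser_iff_cnt {C : Finset α} {P : List (List α)} (hP : IsProfile C P)
    {C' : Finset α} (hsub : C' ⊆ C) {d0 : α} (hd0 : d0 ∈ C') (c : α) :
    IsLoser pluralityS C' (restrictProfile C' P) c ↔
      c ∈ C' ∧ ∀ c' ∈ C',
        P.countP (fun r => decide (topC C' r = some c)) ≤
        P.countP (fun r => decide (topC C' r = some c')) := by
  have hne : ∀ r ∈ P, r.filter (fun x => decide (x ∈ C')) ≠ [] := by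
    intro r hr
    have hd0r : d0 ∈ r := by
      have := (hP r hr).2
      rw [← List.mem_toFinset, this]
      exact hsub hd0
    exact filter_ne_nil_of_mem hd0r hd0
  unfold IsLoser
  constructor
  · rintro ⟨hc, hle⟩
    refine ⟨hc, fun c' hc' => ?_⟩
    have := hle c' hc'
    rw [score_eq_cnt C' P hne, score_eq_cnt C' P hne] at this
    exact_mod_cast this
  · rintro ⟨hc, hle⟩
    refine ⟨hc, fun c' hc' => ?_⟩
    rw [score_eq_cnt C' P hne, score_eq_cnt C' P hne]
    exact_mod_cast hle c' hc'

end RunMachinery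
/-- Bundles all data and hypotheses of the STV reduction. -/
structure STVSetup (α : Type*) [DecidableEq α] (n m : ℕ) where
  Cl : Fin m → Finset (Fin n × Bool)
  hCl3 : ∀ j, (Cl j).card ≤ 3
  hTwice : ∀ ℓ : Fin n × Bool, (Finset.univ.filter fun j => ℓ ∈ Cl j).card = 2
  d : α
  w : α
  cl : Fin m → α
  lit : Fin n × Bool → α
  hdw : d ≠ w
  hclinj : Function.Injective cl
  hlitinj : Function.Injective lit
  hcld : ∀ j, cl j ≠ d
  hclw : ∀ j, cl j ≠ w
  hlitd : ∀ ℓ, lit ℓ ≠ d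
  hlitw : ∀ ℓ, lit ℓ ≠ w
  hcllit : ∀ j ℓ, cl j ≠ lit ℓ
  C : Finset α
  hC : C = insert d (insert w (Finset.univ.image cl ∪ Finset.univ.image lit))
  P : List (List α)
  hP : IsProfile C P
  hforms : ∀ r ∈ P,
      (∃ t, r = d :: t) ∨
      (∃ t, r = w :: d :: t) ∨
      (∃ (j : Fin m) (t : List α), r = cl j :: w :: d :: t) ∨
      (∃ (ℓ : Fin n × Bool) (t : List α),
        r = lit ℓ :: lit (ℓ.1, !ℓ.2) :: w :: d :: t) ∨
      (∃ (ℓ : Fin n × Bool) (j : Fin m) (t : List α),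
        ℓ ∈ Cl j ∧ r = lit ℓ :: cl j :: w :: d :: t)
  h1 : P.countP (fun r => decide (r.take 1 = [d])) = 100
  h2 : P.countP (fun r => decide (r.take 2 = [w, d])) = 99
  h3 : ∀ j : Fin m, P.countP (fun r => decide (r.take 3 = [cl j, w, d])) = 98
  h4 : ∀ ℓ : Fin n × Bool,
      P.countP (fun r => decide (r.take 4 = [lit ℓ, lit (ℓ.1, !ℓ.2), w, d])) = 60
  h5 : ∀ (ℓ : Fin n × Bool) (j : Fin m), ℓ ∈ Cl j →
      P.countP (fun r => decide (r.take 4 = [lit ℓ, cl j, w, d])) = 2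

namespace STVSetup

variable {α : Type*} [DecidableEq α] {n m : ℕ} (S : STVSetup α n m)

/-- The number of voters currently placing `c` on top, within remaining set `C'`. -/
def cnt (C' : Finset α) (c : α) : ℕ :=
  S.P.countP (fun r => decide (topC C' r = some c))

lemma mem_C_iff {x : α} : x ∈ S.C ↔
    x = S.d ∨ x = S.w ∨ (∃ j, x = S.cl j) ∨ (∃ ℓ, x = S.lit ℓ) := by
  rw [S.hC]
  simp [eq_comm]

lemma d_mem_C : S.d ∈ S.C := by rw [S.hC]; simp
lemma w_mem_C : S.w ∈ S.C := by rw [S.hC]; simp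
lemma cl_mem_C (j : Fin m) : S.cl j ∈ S.C := by rw [S.hC]; simp
lemma lit_mem_C (ℓ : Fin n × Bool) : S.lit ℓ ∈ S.C := by rw [S.hC]; simp

lemma lb_w {C' : Finset α} (hw : S.w ∈ C') : 99 ≤ S.cnt C' S.w := by
  rw [← S.h2]
  apply List.countP_mono_left
  intro r _ hr
  obtain ⟨t, rfl⟩ := take2_shape (of_decide_eq_true hr)
  simp [topC_cons, hw]

lemma lb_cl {C' : Finset α} (j : Fin m) (hj : S.cl j ∈ C') : 98 ≤ S.cnt C' (S.cl j) := by
  rw [← S.h3 j]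
  apply List.countP_mono_left
  intro r _ hr
  obtain ⟨t, rfl⟩ := take3_shape (of_decide_eq_true hr)
  simp [topC_cons, hj]

lemma lb_d {C' : Finset α} (hd : S.d ∈ C') : 100 ≤ S.cnt C' S.d := by
  rw [← S.h1]
  apply List.countP_mono_left
  intro r _ hr
  obtain ⟨t, rfl⟩ := take1_shape (of_decide_eq_true hr)
  simp [topC_cons, hd]

lemma lb_d199 {C' : Finset α} (hd : S.d ∈ C') (hw : S.w ∉ C') : 199 ≤ S.cnt C' S.d := by
  have key : S.P.countP (fun r => decide (r.take 1 = [S.d]) || decide (r.take 2 = [S.w, S.d]))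
      = 199 := by
    rw [countP_or_disjoint, S.h1, S.h2]
    rintro r _ ⟨ha, hb⟩
    obtain ⟨t, rfl⟩ := take1_shape (of_decide_eq_true ha)
    obtain ⟨t', ht'⟩ := take2_shape (of_decide_eq_true hb)
    injection ht' with hh _
    exact S.hdw hh
  rw [← key]
  apply List.countP_mono_left
  intro r _ hr
  rcases Bool.or_eq_true_iff.1 hr with h | h
  · obtain ⟨t, rfl⟩ := take1_shape (of_decide_eq_true h)
    simp [topC_cons, hd]
  · obtain ⟨t, rfl⟩ := take2_shape (of_decide_eq_true h)
    simp [topC_cons, hd, hw]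

lemma lb_w197 {C' : Finset α} (hw : S.w ∈ C') (j : Fin m) (hj : S.cl j ∉ C') :
    197 ≤ S.cnt C' S.w := by
  have key : S.P.countP
      (fun r => decide (r.take 2 = [S.w, S.d]) || decide (r.take 3 = [S.cl j, S.w, S.d]))
      = 197 := by
    rw [countP_or_disjoint, S.h2, S.h3 j]
    rintro r _ ⟨ha, hb⟩
    obtain ⟨t, rfl⟩ := take2_shape (of_decide_eq_true ha)
    obtain ⟨t', ht'⟩ := take3_shape (of_decide_eq_true hb)
    injection ht' with hh _
    exact S.hclw j hh.symm
  rw [← key]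
  apply List.countP_mono_left
  intro r _ hr
  rcases Bool.or_eq_true_iff.1 hr with h | h
  · obtain ⟨t, rfl⟩ := take2_shape (of_decide_eq_true h)
    simp [topC_cons, hw]
  · obtain ⟨t, rfl⟩ := take3_shape (of_decide_eq_true h)
    simp [topC_cons, hw, hj]

lemma lb_w159 {C' : Finset α} (hw : S.w ∈ C') (ℓ : Fin n × Bool)
    (hl : S.lit ℓ ∉ C') (hl' : S.lit (ℓ.1, !ℓ.2) ∉ C') :
    159 ≤ S.cnt C' S.w := by
  have key : S.P.countP
      (fun r => decide (r.take 2 = [S.w, S.d]) ||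
        decide (r.take 4 = [S.lit ℓ, S.lit (ℓ.1, !ℓ.2), S.w, S.d])) = 159 := by
    rw [countP_or_disjoint, S.h2, S.h4 ℓ]
    rintro r _ ⟨ha, hb⟩
    obtain ⟨t, rfl⟩ := take2_shape (of_decide_eq_true ha)
    obtain ⟨t', ht'⟩ := take4_shape (of_decide_eq_true hb)
    injection ht' with hh _
    exact S.hlitw ℓ hh.symm
  rw [← key]
  apply List.countP_mono_left
  intro r _ hr
  rcases Bool.or_eq_true_iff.1 hr with h | h
  · obtain ⟨t, rfl⟩ := take2_shape (of_decide_eq_true h)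
    simp [topC_cons, hw]
  · obtain ⟨t, rfl⟩ := take4_shape (of_decide_eq_true h)
    simp [topC_cons, hw, hl, hl']

end STVSetup
namespace STVSetup

variable {α : Type*} [DecidableEq α] {n m : ℕ} (S : STVSetup α n m)

lemma cnt_d_eq {C' : Finset α} (hd : S.d ∈ C') (hw : S.w ∈ C') :
    S.cnt C' S.d = 100 := by
  have hwd : S.w ≠ S.d := Ne.symm S.hdw
  have hdcl : ∀ j, S.d ≠ S.cl j := fun j => (S.hcld j).symm
  have hdlit : ∀ ℓ, S.d ≠ S.lit ℓ := fun ℓ => (S.hlitd ℓ).symm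
  rw [cnt, ← S.h1]
  apply List.countP_congr
  intro r hr
  simp only [decide_eq_true_eq]
  rcases S.hforms r hr with ⟨t, rfl⟩ | ⟨t, rfl⟩ | ⟨j, t, rfl⟩ | ⟨ℓ, t, rfl⟩ | ⟨ℓ, j, t, hm, rfl⟩
  · simp [topC_cons, hd]
  · simp [topC_cons, hw, hwd]
  · by_cases hcl : S.cl j ∈ C' <;>
      simp [topC_cons, hcl, hw, hwd, S.hcld j, hdcl j]
  · by_cases hl1 : S.lit ℓ ∈ C' <;> by_cases hl2 : S.lit (ℓ.1, !ℓ.2) ∈ C' <;>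
      simp [topC_cons, hl1, hl2, hw, hwd, S.hlitd, hdlit]
  · by_cases hl1 : S.lit ℓ ∈ C' <;> by_cases hcl : S.cl j ∈ C' <;>
      simp [topC_cons, hl1, hcl, hw, hwd, S.hlitd, S.hcld, hdlit, hdcl]

lemma cnt_w_eq {C' : Finset α} (hd : S.d ∈ C') (hw : S.w ∈ C')
    (hallcl : ∀ j, S.cl j ∈ C')
    (hvar : ∀ x : Fin n, S.lit (x, true) ∈ C' ∨ S.lit (x, false) ∈ C') :
    S.cnt C' S.w = 99 := by
  have hdne : S.d ≠ S.w := S.hdw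
  have hclw : ∀ j, S.cl j ≠ S.w := S.hclw
  have hlitw : ∀ ℓ, S.lit ℓ ≠ S.w := S.hlitw
  rw [cnt, ← S.h2]
  apply List.countP_congr
  intro r hr
  simp only [decide_eq_true_eq]
  rcases S.hforms r hr with ⟨t, rfl⟩ | ⟨t, rfl⟩ | ⟨j, t, rfl⟩ | ⟨ℓ, t, rfl⟩ | ⟨ℓ, j, t, hm, rfl⟩
  · simp [topC_cons, hd, hdne]
  · simp [topC_cons, hw]
  · simp [topC_cons, hallcl j, hclw j]
  · have hpres : S.lit ℓ ∈ C' ∨ S.lit (ℓ.1, !ℓ.2) ∈ C' := by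
      rcases ℓ with ⟨x, b⟩
      cases b
      · exact (hvar x).symm
      · exact hvar x
    by_cases hl1 : S.lit ℓ ∈ C'
    · simp [topC_cons, hl1, hlitw]
    · have hl2 : S.lit (ℓ.1, !ℓ.2) ∈ C' := hpres.resolve_left hl1
      simp [topC_cons, hl1, hl2, hlitw]
  · by_cases hl1 : S.lit ℓ ∈ C' <;>
      simp [topC_cons, hl1, hallcl j, hlitw, hclw]

end STVSetup
namespace STVSetup

variable {α : Type*} [DecidableEq α] {n m : ℕ} (S : STVSetup α n m)

lemma cnt_cl_eq {C' : Finset α} (hd : S.d ∈ C') (j : Fin m) (hj : S.cl j ∈ C') :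
    S.cnt C' (S.cl j) = 98 + 2 * ((S.Cl j).filter (fun ℓ => S.lit ℓ ∉ C')).card := by
  classical
  set F := (S.Cl j).filter (fun ℓ => S.lit ℓ ∉ C') with hF
  have hdcl : ∀ j', S.d ≠ S.cl j' := fun j' => (S.hcld j').symm
  have hwcl : ∀ j', S.w ≠ S.cl j' := fun j' => (S.hclw j').symm
  have hlitcl : ∀ ℓ j', S.lit ℓ ≠ S.cl j' := fun ℓ j' => (S.hcllit j' ℓ).symm
  have hdlit : ∀ ℓ, S.d ≠ S.lit ℓ := fun ℓ => (S.hlitd ℓ).symm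
  have hwlit : ∀ ℓ, S.w ≠ S.lit ℓ := fun ℓ => (S.hlitw ℓ).symm
  have step1 : S.cnt C' (S.cl j) = S.P.countP
      (fun r => decide (r.take 3 = [S.cl j, S.w, S.d]) ||
        decide (∃ ℓ ∈ F, r.take 4 = [S.lit ℓ, S.cl j, S.w, S.d])) := by
    apply List.countP_congr
    intro r hr
    simp only [Bool.or_eq_true, decide_eq_true_eq]
    rcases S.hforms r hr with ⟨t, rfl⟩ | ⟨t, rfl⟩ | ⟨j', t, rfl⟩ | ⟨ℓ', t, rfl⟩ |
      ⟨ℓ', j', t, hm, rfl⟩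
    · simp [topC_cons, hd, hdcl, hdlit]
    · by_cases hw' : S.w ∈ C' <;>
        simp [topC_cons, hw', hd, hwcl, hdcl, hwlit]
    · by_cases hj' : S.cl j' ∈ C'
      · simp [topC_cons, hj', S.hclinj.eq_iff, S.hcllit, hlitcl]
      · have hne : j' ≠ j := fun h => hj' (h ▸ hj)
        have hne' : S.cl j' ≠ S.cl j := fun h => hne (S.hclinj h)
        by_cases hw' : S.w ∈ C' <;>
          simp [topC_cons, hj', hw', hd, hne', hwcl, hdcl, hlitcl]
    · by_cases hl1 : S.lit ℓ' ∈ C' <;> by_cases hl2 : S.lit (ℓ'.1, !ℓ'.2) ∈ C' <;>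
        by_cases hw' : S.w ∈ C' <;>
        simp [topC_cons, hl1, hl2, hw', hd, hlitcl, hwcl, hdcl, S.hcllit]
    · by_cases hl1 : S.lit ℓ' ∈ C'
      · simp only [topC_cons, if_pos hl1]
        constructor
        · intro h
          exact absurd (Option.some.inj h) (hlitcl ℓ' j)
        · rintro (h | ⟨ℓ, hℓF, h⟩)
          · injection h with h1 _
            exact absurd h1 (hlitcl ℓ' j)
          · injection h with h1 _
            rw [hF, Finset.mem_filter] at hℓF
            exact absurd (S.hlitinj h1 ▸ hl1) hℓF.2
      · by_cases hj' : S.cl j' ∈ C'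
        · simp only [topC_cons, if_neg hl1, if_pos hj']
          constructor
          · intro h
            have hjj : j' = j := S.hclinj (Option.some.inj h)
            subst hjj
            right
            exact ⟨ℓ', by rw [hF, Finset.mem_filter]; exact ⟨hm, hl1⟩, rfl⟩
          · rintro (h | ⟨ℓ, hℓF, h⟩)
            · injection h with h1 _
              exact absurd h1 (hlitcl ℓ' j)
            · injection h with h1 h2
              injection h2 with h2 _
              rw [h2]
        · have hne : j' ≠ j := fun h => hj' (h ▸ hj)
          have hne' : S.cl j' ≠ S.cl j := fun h => hne (S.hclinj h)
          by_cases hw' : S.w ∈ C' <;>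
            simp [topC_cons, hl1, hj', hw', hd, hne', hwcl, hdcl, hlitcl]
  rw [step1, countP_or_disjoint]
  · have hcongr : S.P.countP (fun r => decide (∃ ℓ ∈ F, r.take 4 = [S.lit ℓ, S.cl j, S.w, S.d]))
        = S.P.countP (fun r => decide (∃ ℓ ∈ F,
            (fun (ℓ : Fin n × Bool) r => decide (r.take 4 = [S.lit ℓ, S.cl j, S.w, S.d])) ℓ r
              = true)) := by
      apply List.countP_congr
      intro r _
      simp
    have hB : S.P.countP (fun r => decide (∃ ℓ ∈ F, r.take 4 = [S.lit ℓ, S.cl j, S.w, S.d]))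
        = 2 * F.card := by
      rw [hcongr, countP_exists_finset]
      · rw [Finset.sum_congr rfl (fun ℓ hℓ => S.h5 ℓ j (Finset.mem_filter.1 (hF ▸ hℓ)).1)]
        rw [Finset.sum_const, smul_eq_mul, mul_comm]
      · intro r _ ℓ₁ _ ℓ₂ _ hf1 hf2
        obtain ⟨t, rfl⟩ := take4_shape (of_decide_eq_true hf1)
        have := of_decide_eq_true hf2
        injection this with h1 _
        exact S.hlitinj h1
    rw [S.h3 j, hB]
  · rintro r _ ⟨ha, hb⟩
    obtain ⟨ℓ, hℓ, h4⟩ := of_decide_eq_true hb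
    obtain ⟨t, rfl⟩ := take4_shape h4
    have := of_decide_eq_true ha
    injection this with h1 _
    exact hlitcl ℓ j h1.symm.symm

end STVSetup
namespace STVSetup

variable {α : Type*} [DecidableEq α] {n m : ℕ} (S : STVSetup α n m)

lemma partner_ne (ℓ : Fin n × Bool) : (ℓ.1, !ℓ.2) ≠ ℓ := by
  intro h
  have := congrArg Prod.snd h
  simp at this

lemma cnt_lit_eq {C' : Finset α} (hd : S.d ∈ C') (ℓ : Fin n × Bool)
    (hl : S.lit ℓ ∈ C') :
    S.cnt C' (S.lit ℓ) = if S.lit (ℓ.1, !ℓ.2) ∈ C' then 64 else 124 := by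
  classical
  have hdlit : ∀ ℓ', S.d ≠ S.lit ℓ' := fun ℓ' => (S.hlitd ℓ').symm
  have hwlit : ∀ ℓ', S.w ≠ S.lit ℓ' := fun ℓ' => (S.hlitw ℓ').symm
  have hcllit : ∀ j' ℓ', S.cl j' ≠ S.lit ℓ' := S.hcllit
  have hlitcl : ∀ ℓ' j', S.lit ℓ' ≠ S.cl j' := fun ℓ' j' => (S.hcllit j' ℓ').symm
  have hpne : (ℓ.1, !ℓ.2) ≠ ℓ := partner_ne ℓ
  set T := Finset.univ.filter (fun j => ℓ ∈ S.Cl j) with hT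
  have step1 : S.cnt C' (S.lit ℓ) = S.P.countP
      (fun r => decide (r.take 4 = [S.lit ℓ, S.lit (ℓ.1, !ℓ.2), S.w, S.d]) ||
        ((decide (S.lit (ℓ.1, !ℓ.2) ∉ C') &&
          decide (r.take 4 = [S.lit (ℓ.1, !ℓ.2), S.lit ℓ, S.w, S.d])) ||
        decide (∃ j ∈ T, r.take 4 = [S.lit ℓ, S.cl j, S.w, S.d]))) := by
    apply List.countP_congr
    intro r hr
    simp only [Bool.or_eq_true, Bool.and_eq_true, decide_eq_true_eq]
    rcases S.hforms r hr with ⟨t, rfl⟩ | ⟨t, rfl⟩ | ⟨j', t, rfl⟩ | ⟨ℓ', t, rfl⟩ |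
      ⟨ℓ', j', t, hm, rfl⟩
    · simp [topC_cons, hd, hdlit]
    · by_cases hw' : S.w ∈ C' <;> simp [topC_cons, hw', hd, hwlit, hdlit]
    · by_cases hj' : S.cl j' ∈ C' <;> by_cases hw' : S.w ∈ C' <;>
        simp [topC_cons, hj', hw', hd, hcllit, hwlit, hdlit]
    · rcases eq_or_ne ℓ' ℓ with rfl | e1
      · simp [topC_cons, hl]
      · rcases eq_or_ne ℓ' (ℓ.1, !ℓ.2) with rfl | e2
        · have hee : ((ℓ.1, !ℓ.2).1, !(ℓ.1, !ℓ.2).2) = ℓ := by simp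
          rw [hee]
          have hne2 : S.lit (ℓ.1, !ℓ.2) ≠ S.lit ℓ := fun h => hpne (S.hlitinj h)
          by_cases h2' : S.lit (ℓ.1, !ℓ.2) ∈ C'
          · simp [topC_cons, h2', hne2, hlitcl]
          · simp [topC_cons, h2', hl, hne2]
        · have e2' : (ℓ'.1, !ℓ'.2) ≠ ℓ := by
            intro h
            apply e2
            rw [← h]
            simp
          have hne1 : S.lit ℓ' ≠ S.lit ℓ := fun h => e1 (S.hlitinj h)
          have hne2 : S.lit (ℓ'.1, !ℓ'.2) ≠ S.lit ℓ := fun h => e2' (S.hlitinj h)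
          have hne3 : S.lit ℓ' ≠ S.lit (ℓ.1, !ℓ.2) := fun h => e2 (S.hlitinj h)
          by_cases h1' : S.lit ℓ' ∈ C' <;> by_cases h2' : S.lit (ℓ'.1, !ℓ'.2) ∈ C' <;>
            by_cases hw' : S.w ∈ C' <;>
            simp [topC_cons, h1', h2', hw', hd, hne1, hne2, hne3, hwlit, hdlit, hlitcl]
    · rcases eq_or_ne ℓ' ℓ with rfl | e1
      · simp only [topC_cons, if_pos hl]
        constructor
        · intro _
          right; right
          exact ⟨j', by rw [hT]; simp [hm], rfl⟩
        · intro _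
          trivial
      · have hne1 : S.lit ℓ' ≠ S.lit ℓ := fun h => e1 (S.hlitinj h)
        by_cases h1' : S.lit ℓ' ∈ C' <;> by_cases hj' : S.cl j' ∈ C' <;>
          by_cases hw' : S.w ∈ C' <;>
          simp [topC_cons, h1', hj', hw', hd, hne1, hlitcl, hcllit, hwlit, hdlit]
  have hdisj2 : ∀ r ∈ S.P, ¬((decide (S.lit (ℓ.1, !ℓ.2) ∉ C') &&
          decide (r.take 4 = [S.lit (ℓ.1, !ℓ.2), S.lit ℓ, S.w, S.d])) = true ∧
        (decide (∃ j ∈ T, r.take 4 = [S.lit ℓ, S.cl j, S.w, S.d])) = true) := by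
    rintro r _ ⟨ha, hb⟩
    obtain ⟨_, ha2⟩ := Bool.and_eq_true_iff.1 ha
    obtain ⟨t, rfl⟩ := take4_shape (of_decide_eq_true ha2)
    obtain ⟨j'', _, hb2⟩ := of_decide_eq_true hb
    injection hb2 with h1 _
    exact (fun h => partner_ne ℓ (S.hlitinj h)) h1
  have hdisj1 : ∀ r ∈ S.P, ¬((decide (r.take 4 = [S.lit ℓ, S.lit (ℓ.1, !ℓ.2), S.w, S.d])) = true ∧
      ((decide (S.lit (ℓ.1, !ℓ.2) ∉ C') &&
          decide (r.take 4 = [S.lit (ℓ.1, !ℓ.2), S.lit ℓ, S.w, S.d])) ||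
        decide (∃ j ∈ T, r.take 4 = [S.lit ℓ, S.cl j, S.w, S.d])) = true) := by
    rintro r _ ⟨ha, hb⟩
    obtain ⟨t, rfl⟩ := take4_shape (of_decide_eq_true ha)
    rcases Bool.or_eq_true_iff.1 hb with h | h
    · obtain ⟨_, h2⟩ := Bool.and_eq_true_iff.1 h
      have := of_decide_eq_true h2
      injection this with h1 _
      exact partner_ne ℓ (S.hlitinj h1.symm)
    · obtain ⟨j'', _, hb2⟩ := of_decide_eq_true h
      injection hb2 with _ h2
      injection h2 with h2 _
      exact S.hcllit j'' (ℓ.1, !ℓ.2) h2.symm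
  rw [step1, countP_or_disjoint _ _ _ hdisj1, countP_or_disjoint _ _ _ hdisj2, S.h4 ℓ]
  have hmid : S.P.countP (fun r => decide (S.lit (ℓ.1, !ℓ.2) ∉ C') &&
      decide (r.take 4 = [S.lit (ℓ.1, !ℓ.2), S.lit ℓ, S.w, S.d]))
      = if S.lit (ℓ.1, !ℓ.2) ∈ C' then 0 else 60 := by
    by_cases h2' : S.lit (ℓ.1, !ℓ.2) ∈ C'
    · rw [if_pos h2']
      rw [List.countP_eq_zero]
      intro r _
      simp [h2']
    · rw [if_neg h2']
      have h4' := S.h4 (ℓ.1, !ℓ.2)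
      have hee : ((ℓ.1, !ℓ.2).1, !(ℓ.1, !ℓ.2).2) = ℓ := by simp
      rw [hee] at h4'
      rw [← h4']
      apply List.countP_congr
      intro r _
      simp [h2']
  have hex : S.P.countP
      (fun r => decide (∃ j ∈ T, r.take 4 = [S.lit ℓ, S.cl j, S.w, S.d])) = 4 := by
    have hcongr : S.P.countP (fun r => decide (∃ j ∈ T, r.take 4 = [S.lit ℓ, S.cl j, S.w, S.d]))
        = S.P.countP (fun r => decide (∃ j ∈ T,
            (fun (j : Fin m) r => decide (r.take 4 = [S.lit ℓ, S.cl j, S.w, S.d])) j r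
              = true)) := by
      apply List.countP_congr
      intro r _
      simp
    rw [hcongr]
    refine Eq.trans (Eq.trans (by congr 1; funext r; exact decide_eq_decide.2 Iff.rfl) (countP_exists_finset T (fun (j : Fin m) r => decide (r.take 4 = [S.lit ℓ, S.cl j, S.w, S.d])) S.P ?_)) ?_
    rotate_left
    · rw [Finset.sum_congr rfl (fun j hj => S.h5 ℓ j (by
        rw [hT] at hj
        exact (Finset.mem_filter.1 hj).2))]
      rw [Finset.sum_const, smul_eq_mul]
      have : T.card = 2 := hT ▸ S.hTwice ℓ
      rw [this]
    · intro r _ j₁ _ j₂ _ hf1 hf2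
      obtain ⟨t, rfl⟩ := take4_shape (of_decide_eq_true hf1)
      have := of_decide_eq_true hf2
      injection this with _ h2
      injection h2 with h2 _
      exact S.hclinj h2
  rw [hmid, hex]
  by_cases h2' : S.lit (ℓ.1, !ℓ.2) ∈ C' <;> simp [h2']

end STVSetup
namespace STVSetup

variable {α : Type*} [DecidableEq α] {n m : ℕ} (S : STVSetup α n m) (v : Fin n → Bool)

/-- Kept (true under the dual reading) literal candidates. -/
def keptLits : Finset α := Finset.univ.image (fun x => S.lit (x, !v x))

/-- Stage-1 candidate sets: everything except the removed literals `lit (x, v x)`, `x ∉ A`. -/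
def C1 (A : Finset (Fin n)) : Finset α :=
  insert S.d (insert S.w
    (Finset.univ.image S.cl ∪ S.keptLits v ∪ A.image (fun x => S.lit (x, v x))))

/-- Stage-3 candidate sets: `d`, clauses in `B`, kept literals. -/
def C3 (B : Finset (Fin m)) : Finset α := insert S.d (B.image S.cl ∪ S.keptLits v)

/-- Stage-4 candidate sets: `d` and kept literals with variables in `A`. -/
def C4 (A : Finset (Fin n)) : Finset α := insert S.d (A.image (fun x => S.lit (x, !v x)))

lemma mem_C1_iff {A : Finset (Fin n)} {c : α} : c ∈ S.C1 v A ↔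
    c = S.d ∨ c = S.w ∨ (∃ j, c = S.cl j) ∨ (∃ x, c = S.lit (x, !v x)) ∨
      (∃ x ∈ A, c = S.lit (x, v x)) := by
  simp [C1, keptLits, eq_comm]

lemma mem_C3_iff {B : Finset (Fin m)} {c : α} : c ∈ S.C3 v B ↔
    c = S.d ∨ (∃ j ∈ B, c = S.cl j) ∨ (∃ x, c = S.lit (x, !v x)) := by
  simp [C3, keptLits, eq_comm]

lemma mem_C4_iff {A : Finset (Fin n)} {c : α} : c ∈ S.C4 v A ↔
    c = S.d ∨ (∃ x ∈ A, c = S.lit (x, !v x)) := by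
  simp [C4, eq_comm]

lemma lit_eq_iff {ℓ ℓ' : Fin n × Bool} : S.lit ℓ = S.lit ℓ' ↔ ℓ = ℓ' := S.hlitinj.eq_iff

lemma vlit_mem_C1_iff {A : Finset (Fin n)} {x : Fin n} :
    S.lit (x, v x) ∈ S.C1 v A ↔ x ∈ A := by
  rw [mem_C1_iff]
  constructor
  · rintro (h | h | ⟨j, h⟩ | ⟨y, h⟩ | ⟨y, hy, h⟩)
    · exact absurd h.symm (S.hlitd _).symm
    · exact absurd h.symm (S.hlitw _).symm
    · exact absurd h.symm (S.hcllit _ _)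
    · rw [lit_eq_iff] at h
      have h1 := congrArg Prod.fst h
      have h2 := congrArg Prod.snd h
      simp at h1 h2
      subst h1
      simp at h2
    · rw [lit_eq_iff] at h
      have h1 := congrArg Prod.fst h
      simp at h1
      subst h1
      exact hy
  · intro hx
    exact Or.inr (Or.inr (Or.inr (Or.inr ⟨x, hx, rfl⟩)))

lemma keptlit_mem_C1 {A : Finset (Fin n)} (x : Fin n) : S.lit (x, !v x) ∈ S.C1 v A := by
  rw [mem_C1_iff]
  exact Or.inr (Or.inr (Or.inr (Or.inl ⟨x, rfl⟩)))

lemma d_mem_C1 {A : Finset (Fin n)} : S.d ∈ S.C1 v A := by rw [mem_C1_iff]; left; rfl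
lemma w_mem_C1 {A : Finset (Fin n)} : S.w ∈ S.C1 v A := by
  rw [mem_C1_iff]; right; left; rfl
lemma cl_mem_C1 {A : Finset (Fin n)} (j : Fin m) : S.cl j ∈ S.C1 v A := by
  rw [mem_C1_iff]; exact Or.inr (Or.inr (Or.inl ⟨j, rfl⟩))

lemma d_mem_C3 {B : Finset (Fin m)} : S.d ∈ S.C3 v B := by rw [mem_C3_iff]; left; rfl
lemma d_mem_C4 {A : Finset (Fin n)} : S.d ∈ S.C4 v A := by rw [mem_C4_iff]; left; rfl

lemma w_not_mem_C3 {B : Finset (Fin m)} : S.w ∉ S.C3 v B := by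
  rw [mem_C3_iff]
  rintro (h | ⟨j, _, h⟩ | ⟨x, h⟩)
  · exact S.hdw h.symm
  · exact S.hclw j h.symm
  · exact S.hlitw _ h.symm

lemma w_not_mem_C4 {A : Finset (Fin n)} : S.w ∉ S.C4 v A := by
  rw [mem_C4_iff]
  rintro (h | ⟨x, _, h⟩)
  · exact S.hdw h.symm
  · exact S.hlitw _ h.symm

lemma vlit_not_mem_C3 {B : Finset (Fin m)} (x : Fin n) : S.lit (x, v x) ∉ S.C3 v B := by
  rw [mem_C3_iff]
  rintro (h | ⟨j, _, h⟩ | ⟨y, h⟩)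
  · exact S.hlitd _ h
  · exact S.hcllit j _ h.symm
  · rw [lit_eq_iff] at h
    have h1 := congrArg Prod.fst h
    have h2 := congrArg Prod.snd h
    simp at h1 h2
    subst h1
    simp at h2

lemma vlit_not_mem_C4 {A : Finset (Fin n)} (x : Fin n) : S.lit (x, v x) ∉ S.C4 v A := by
  rw [mem_C4_iff]
  rintro (h | ⟨y, _, h⟩)
  · exact S.hlitd _ h
  · rw [lit_eq_iff] at h
    have h1 := congrArg Prod.fst h
    have h2 := congrArg Prod.snd h
    simp at h1 h2
    subst h1
    simp at h2

lemma C1_subset_C {A : Finset (Fin n)} : S.C1 v A ⊆ S.C := by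
  intro c hc
  rcases (S.mem_C1_iff v).1 hc with rfl | rfl | ⟨j, rfl⟩ | ⟨x, rfl⟩ | ⟨x, _, rfl⟩
  · exact S.d_mem_C
  · exact S.w_mem_C
  · exact S.cl_mem_C j
  · exact S.lit_mem_C _
  · exact S.lit_mem_C _

lemma C3_subset_C {B : Finset (Fin m)} : S.C3 v B ⊆ S.C := by
  intro c hc
  rcases (S.mem_C3_iff v).1 hc with rfl | ⟨j, _, rfl⟩ | ⟨x, rfl⟩
  · exact S.d_mem_C
  · exact S.cl_mem_C j
  · exact S.lit_mem_C _

lemma C4_subset_C {A : Finset (Fin n)} : S.C4 v A ⊆ S.C := by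
  intro c hc
  rcases (S.mem_C4_iff v).1 hc with rfl | ⟨x, _, rfl⟩
  · exact S.d_mem_C
  · exact S.lit_mem_C _

lemma C1_erase {A : Finset (Fin n)} {x : Fin n} (hx : x ∉ A) :
    (S.C1 v (insert x A)).erase (S.lit (x, v x)) = S.C1 v A := by
  ext c
  rw [Finset.mem_erase, mem_C1_iff, mem_C1_iff]
  constructor
  · rintro ⟨hne, h | h | h | h | ⟨y, hy, rfl⟩⟩
    · exact Or.inl h
    · exact Or.inr (Or.inl h)
    · exact Or.inr (Or.inr (Or.inl h))
    · exact Or.inr (Or.inr (Or.inr (Or.inl h)))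
    · rcases Finset.mem_insert.1 hy with rfl | hy'
      · exact absurd rfl hne
      · exact Or.inr (Or.inr (Or.inr (Or.inr ⟨y, hy', rfl⟩)))
  · rintro (h | h | h | h | ⟨y, hy, rfl⟩)
    · refine ⟨?_, Or.inl h⟩; subst h; exact (S.hlitd _).symm
    · refine ⟨?_, Or.inr (Or.inl h)⟩; subst h; exact (S.hlitw _).symm
    · obtain ⟨j, rfl⟩ := h
      exact ⟨S.hcllit j _, Or.inr (Or.inr (Or.inl ⟨j, rfl⟩))⟩
    · obtain ⟨y, rfl⟩ := h
      refine ⟨?_, Or.inr (Or.inr (Or.inr (Or.inl ⟨y, rfl⟩)))⟩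
      rw [Ne, lit_eq_iff]
      intro h
      have h1 := congrArg Prod.fst h
      have h2 := congrArg Prod.snd h
      simp at h1 h2
      subst h1
      simp at h2
    · refine ⟨?_, Or.inr (Or.inr (Or.inr (Or.inr ⟨y, Finset.mem_insert_of_mem hy, rfl⟩)))⟩
      rw [Ne, lit_eq_iff]
      intro h
      have h1 := congrArg Prod.fst h
      simp at h1
      subst h1
      exact hx hy
  
lemma C1_empty_erase_w : (S.C1 v ∅).erase S.w = S.C3 v Finset.univ := by
  ext c
  rw [Finset.mem_erase, mem_C1_iff, mem_C3_iff]
  constructor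
  · rintro ⟨hne, h | h | h | h | ⟨y, hy, rfl⟩⟩
    · exact Or.inl h
    · exact absurd h hne
    · obtain ⟨j, rfl⟩ := h
      exact Or.inr (Or.inl ⟨j, Finset.mem_univ j, rfl⟩)
    · exact Or.inr (Or.inr h)
    · simp at hy
  · rintro (h | ⟨j, _, rfl⟩ | ⟨x, rfl⟩)
    · refine ⟨?_, Or.inl h⟩; subst h; exact S.hdw
    · exact ⟨S.hclw j, Or.inr (Or.inr (Or.inl ⟨j, rfl⟩))⟩
    · exact ⟨S.hlitw _, Or.inr (Or.inr (Or.inr (Or.inl ⟨x, rfl⟩)))⟩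

lemma C3_erase {B : Finset (Fin m)} {j : Fin m} (hj : j ∉ B) :
    (S.C3 v (insert j B)).erase (S.cl j) = S.C3 v B := by
  ext c
  rw [Finset.mem_erase, mem_C3_iff, mem_C3_iff]
  constructor
  · rintro ⟨hne, h | ⟨j', hj', rfl⟩ | h⟩
    · exact Or.inl h
    · rcases Finset.mem_insert.1 hj' with rfl | hj''
      · exact absurd rfl hne
      · exact Or.inr (Or.inl ⟨j', hj'', rfl⟩)
    · exact Or.inr (Or.inr h)
  · rintro (h | ⟨j', hj', rfl⟩ | ⟨x, rfl⟩)
    · refine ⟨?_, Or.inl h⟩; subst h; exact (S.hcld j).symm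
    · refine ⟨?_, Or.inr (Or.inl ⟨j', Finset.mem_insert_of_mem hj', rfl⟩)⟩
      rw [Ne, S.hclinj.eq_iff]
      rintro rfl
      exact hj hj'
    · exact ⟨(S.hcllit j _).symm, Or.inr (Or.inr ⟨x, rfl⟩)⟩

lemma C3_univ_eq_C4_univ : S.C3 v ∅ = S.C4 v Finset.univ := by
  ext c
  rw [mem_C3_iff, mem_C4_iff]
  simp

lemma C4_erase {A : Finset (Fin n)} {x : Fin n} (hx : x ∉ A) :
    (S.C4 v (insert x A)).erase (S.lit (x, !v x)) = S.C4 v A := by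
  ext c
  rw [Finset.mem_erase, mem_C4_iff, mem_C4_iff]
  constructor
  · rintro ⟨hne, h | ⟨y, hy, rfl⟩⟩
    · exact Or.inl h
    · rcases Finset.mem_insert.1 hy with rfl | hy'
      · exact absurd rfl hne
      · exact Or.inr ⟨y, hy', rfl⟩
  · rintro (h | ⟨y, hy, rfl⟩)
    · refine ⟨?_, Or.inl h⟩; subst h; exact (S.hlitd _).symm
    · refine ⟨?_, Or.inr ⟨y, Finset.mem_insert_of_mem hy, rfl⟩⟩
      rw [Ne, lit_eq_iff]
      intro h
      have h1 := congrArg Prod.fst h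
      simp at h1
      subst h1
      exact hx hy

lemma C4_empty : S.C4 v ∅ = {S.d} := by simp [C4]

lemma C_eq_C1_univ : S.C = S.C1 v Finset.univ := by
  ext c
  rw [S.mem_C_iff, mem_C1_iff]
  constructor
  · rintro (h | h | h | ⟨ℓ, rfl⟩)
    · exact Or.inl h
    · exact Or.inr (Or.inl h)
    · exact Or.inr (Or.inr (Or.inl h))
    · rcases ℓ with ⟨x, b⟩
      by_cases hb : b = v x
      · subst hb
        exact Or.inr (Or.inr (Or.inr (Or.inr ⟨x, Finset.mem_univ x, rfl⟩)))
      · have : b = !v x := by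
          cases b <;> cases hvx : v x <;> simp_all
        subst this
        exact Or.inr (Or.inr (Or.inr (Or.inl ⟨x, rfl⟩)))
  · rintro (h | h | h | ⟨x, rfl⟩ | ⟨x, _, rfl⟩)
    · exact Or.inl h
    · exact Or.inr (Or.inl h)
    · exact Or.inr (Or.inr (Or.inl h))
    · exact Or.inr (Or.inr (Or.inr ⟨_, rfl⟩))
    · exact Or.inr (Or.inr (Or.inr ⟨_, rfl⟩))

end STVSetup
namespace STVSetup

variable {α : Type*} [DecidableEq α] {n m : ℕ} (S : STVSetup α n m) (v : Fin n → Bool)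

lemma isLoser_of_cnt {C' : Finset α} (hsub : C' ⊆ S.C) (hd : S.d ∈ C') {c : α}
    (hc : c ∈ C') (h : ∀ c' ∈ C', S.cnt C' c ≤ S.cnt C' c') :
    IsLoser pluralityS C' (restrictProfile C' S.P) c :=
  (isLoser_iff_cnt S.hP hsub hd c).2 ⟨hc, h⟩

lemma cnt_of_isLoser {C' : Finset α} (hsub : C' ⊆ S.C) (hd : S.d ∈ C') {c : α}
    (h : IsLoser pluralityS C' (restrictProfile C' S.P) c) :
    ∀ c' ∈ C', S.cnt C' c ≤ S.cnt C' c' :=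
  ((isLoser_iff_cnt S.hP hsub hd c).1 h).2

/-- Number of literals of clause `j` set false by keeping literals `(x, !v x)`. -/
def kv (j : Fin m) : ℕ := ((S.Cl j).filter (fun ℓ => ℓ.2 = v ℓ.1)).card

lemma kv_le_3 (j : Fin m) : S.kv v j ≤ 3 :=
  le_trans (Finset.card_filter_le _ _) (S.hCl3 j)

lemma lit_mem_C1_empty_iff {ℓ : Fin n × Bool} :
    S.lit ℓ ∈ S.C1 v ∅ ↔ ℓ.2 = !v ℓ.1 := by
  rw [mem_C1_iff]
  constructor
  · rintro (h | h | ⟨j, h⟩ | ⟨x, h⟩ | ⟨x, hx, h⟩)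
    · exact absurd h (S.hlitd ℓ)
    · exact absurd h (S.hlitw ℓ)
    · exact absurd h.symm (S.hcllit j ℓ)
    · rw [lit_eq_iff] at h
      subst h
      rfl
    · simp at hx
  · intro h
    refine Or.inr (Or.inr (Or.inr (Or.inl ⟨ℓ.1, ?_⟩)))
    rw [← h]

lemma lit_mem_C3_iff {B : Finset (Fin m)} {ℓ : Fin n × Bool} :
    S.lit ℓ ∈ S.C3 v B ↔ ℓ.2 = !v ℓ.1 := by
  rw [mem_C3_iff]
  constructor
  · rintro (h | ⟨j, _, h⟩ | ⟨x, h⟩)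
    · exact absurd h (S.hlitd ℓ)
    · exact absurd h.symm (S.hcllit j ℓ)
    · rw [lit_eq_iff] at h
      subst h
      rfl
  · intro h
    refine Or.inr (Or.inr ⟨ℓ.1, ?_⟩)
    rw [← h]

lemma filter_notmem_eq_kv {C' : Finset α}
    (hlit : ∀ ℓ : Fin n × Bool, S.lit ℓ ∈ C' ↔ ℓ.2 = !v ℓ.1) (j : Fin m) :
    ((S.Cl j).filter (fun ℓ => S.lit ℓ ∉ C')).card = S.kv v j := by
  unfold kv
  congr 1
  apply Finset.filter_congr
  intro ℓ _
  rw [hlit ℓ]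
  cases hb : ℓ.2 <;> cases hv : v ℓ.1 <;> simp

lemma cnt_cl_C1_empty (j : Fin m) :
    S.cnt (S.C1 v ∅) (S.cl j) = 98 + 2 * S.kv v j := by
  rw [S.cnt_cl_eq (S.d_mem_C1 v) j (S.cl_mem_C1 v j),
    S.filter_notmem_eq_kv v (fun ℓ => S.lit_mem_C1_empty_iff v) j]

lemma cnt_cl_C3 {B : Finset (Fin m)} (j : Fin m) (hj : S.cl j ∈ S.C3 v B) :
    S.cnt (S.C3 v B) (S.cl j) = 98 + 2 * S.kv v j := by
  rw [S.cnt_cl_eq (S.d_mem_C3 v) j hj,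
    S.filter_notmem_eq_kv v (fun ℓ => S.lit_mem_C3_iff v) j]

lemma cnt_keptlit_C3 {B : Finset (Fin m)} (x : Fin n) :
    S.cnt (S.C3 v B) (S.lit (x, !v x)) = 124 := by
  rw [S.cnt_lit_eq (S.d_mem_C3 v) _ (by rw [S.lit_mem_C3_iff v])]
  simp only [Bool.not_not]
  rw [if_neg (S.vlit_not_mem_C3 v x)]

lemma cnt_keptlit_C4 {A : Finset (Fin n)} (x : Fin n) (hx : x ∈ A) :
    S.cnt (S.C4 v A) (S.lit (x, !v x)) = 124 := by
  rw [S.cnt_lit_eq (S.d_mem_C4 v) _ (by rw [mem_C4_iff]; exact Or.inr ⟨x, hx, rfl⟩)]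
  simp only [Bool.not_not]
  rw [if_neg (S.vlit_not_mem_C4 v x)]

lemma stage4 (xs : List (Fin n)) (hnd : xs.Nodup) :
    Run S.P (S.C4 v xs.toFinset) (xs.map (fun x => S.lit (x, !v x)) ++ [S.d]) := by
  induction xs with
  | nil =>
    simp only [List.toFinset_nil, List.map_nil, List.nil_append]
    rw [S.C4_empty v]
    rw [run_cons]
    refine ⟨⟨Finset.mem_singleton_self _, fun c' hc' => ?_⟩, ?_⟩
    · rw [Finset.mem_singleton] at hc'
      subst hc'
      exact le_refl _
    · show SeqLoserSel pluralityS [] _ _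
      simp [SeqLoserSel]
  | cons x xs ih =>
    rw [List.nodup_cons] at hnd
    have hx : x ∉ xs.toFinset := fun h => hnd.1 (List.mem_toFinset.1 h)
    simp only [List.toFinset_cons, List.map_cons, List.cons_append]
    rw [run_cons]
    have hmem : S.lit (x, !v x) ∈ S.C4 v (insert x xs.toFinset) := by
      rw [mem_C4_iff]
      exact Or.inr ⟨x, Finset.mem_insert_self _ _, rfl⟩
    refine ⟨?_, by rw [S.C4_erase v hx]; exact ih hnd.2⟩
    apply S.isLoser_of_cnt (S.C4_subset_C v) (S.d_mem_C4 v) hmem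
    intro c' hc'
    rw [S.cnt_keptlit_C4 v x (Finset.mem_insert_self _ _)]
    rcases (S.mem_C4_iff v).1 hc' with rfl | ⟨y, hy, rfl⟩
    · exact le_trans (by norm_num) (S.lb_d199 (S.d_mem_C4 v) (S.w_not_mem_C4 v))
    · rw [S.cnt_keptlit_C4 v y hy]

lemma stage3 (js : List (Fin m)) (hnd : js.Nodup)
    (hsort : js.Pairwise (fun a b => S.kv v a ≤ S.kv v b))
    (rest : List α) (hbase : Run S.P (S.C3 v ∅) rest) :
    Run S.P (S.C3 v js.toFinset) (js.map S.cl ++ rest) := by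
  induction js with
  | nil => simpa using hbase
  | cons j js ih =>
    rw [List.nodup_cons] at hnd
    rw [List.pairwise_cons] at hsort
    have hj : j ∉ js.toFinset := fun h => hnd.1 (List.mem_toFinset.1 h)
    simp only [List.toFinset_cons, List.map_cons, List.cons_append]
    rw [run_cons]
    have hmem : S.cl j ∈ S.C3 v (insert j js.toFinset) := by
      rw [mem_C3_iff]
      exact Or.inr (Or.inl ⟨j, Finset.mem_insert_self _ _, rfl⟩)
    refine ⟨?_, by rw [S.C3_erase v hj]; exact ih hnd.2 hsort.2⟩
    apply S.isLoser_of_cnt (S.C3_subset_C v) (S.d_mem_C3 v) hmem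
    intro c' hc'
    rw [S.cnt_cl_C3 v j hmem]
    have hk3 := S.kv_le_3 v j
    rcases (S.mem_C3_iff v).1 hc' with rfl | ⟨j', hj', rfl⟩ | ⟨y, rfl⟩
    · exact le_trans (by omega) (S.lb_d199 (S.d_mem_C3 v) (S.w_not_mem_C3 v))
    · rw [S.cnt_cl_C3 v j' (by rw [mem_C3_iff]; exact Or.inr (Or.inl ⟨j', hj', rfl⟩))]
      rcases Finset.mem_insert.1 hj' with rfl | hj''
      · exact le_refl _
      · have := hsort.1 j' (List.mem_toFinset.1 hj'')
        omega
    · rw [S.cnt_keptlit_C3 v y]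
      omega

lemma stage2 (hsat : ∀ j, ∃ ℓ ∈ S.Cl j, v ℓ.1 = ℓ.2)
    (rest : List α) (hbase : Run S.P (S.C3 v Finset.univ) rest) :
    Run S.P (S.C1 v ∅) (S.w :: rest) := by
  rw [run_cons]
  refine ⟨?_, by rw [S.C1_empty_erase_w v]; exact hbase⟩
  apply S.isLoser_of_cnt (S.C1_subset_C v) (S.d_mem_C1 v) (S.w_mem_C1 v)
  intro c' hc'
  have hw99 : S.cnt (S.C1 v ∅) S.w = 99 := by
    apply S.cnt_w_eq (S.d_mem_C1 v) (S.w_mem_C1 v) (fun j => S.cl_mem_C1 v j)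
    intro x
    have hk := S.keptlit_mem_C1 v (A := (∅ : Finset (Fin n))) x
    cases hvx : v x
    · rw [hvx] at hk
      exact Or.inl (by simpa using hk)
    · rw [hvx] at hk
      exact Or.inr (by simpa using hk)
  rw [hw99]
  rcases (S.mem_C1_iff v).1 hc' with rfl | rfl | ⟨j, rfl⟩ | ⟨y, rfl⟩ | ⟨y, hy, rfl⟩
  · exact le_trans (by norm_num) (S.lb_d (S.d_mem_C1 v))
  · exact hw99.ge
  · rw [S.cnt_cl_C1_empty v j]
    have hk : 1 ≤ S.kv v j := by
      obtain ⟨ℓ, hℓ, hvℓ⟩ := hsat j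
      apply Finset.card_pos.2
      exact ⟨ℓ, Finset.mem_filter.2 ⟨hℓ, hvℓ.symm⟩⟩
    omega
  · have : S.cnt (S.C1 v ∅) (S.lit (y, !v y)) = 124 := by
      rw [S.cnt_lit_eq (S.d_mem_C1 v) _ (S.keptlit_mem_C1 v y)]
      simp only [Bool.not_not]
      rw [if_neg (by rw [S.vlit_mem_C1_iff v]; exact Finset.notMem_empty y)]
    omega
  · simp at hy

lemma stage1 (xs : List (Fin n)) (hnd : xs.Nodup)
    (rest : List α) (hbase : Run S.P (S.C1 v ∅) rest) :
    Run S.P (S.C1 v xs.toFinset) (xs.map (fun x => S.lit (x, v x)) ++ rest) := by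
  induction xs with
  | nil => simpa using hbase
  | cons x xs ih =>
    rw [List.nodup_cons] at hnd
    have hx : x ∉ xs.toFinset := fun h => hnd.1 (List.mem_toFinset.1 h)
    simp only [List.toFinset_cons, List.map_cons, List.cons_append]
    rw [run_cons]
    have hmem : S.lit (x, v x) ∈ S.C1 v (insert x xs.toFinset) := by
      rw [S.vlit_mem_C1_iff v]
      exact Finset.mem_insert_self _ _
    refine ⟨?_, by rw [S.C1_erase v hx]; exact ih hnd.2⟩
    apply S.isLoser_of_cnt (S.C1_subset_C v) (S.d_mem_C1 v) hmem
    intro c' hc'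
    have h64 : S.cnt (S.C1 v (insert x xs.toFinset)) (S.lit (x, v x)) = 64 := by
      rw [S.cnt_lit_eq (S.d_mem_C1 v) _ hmem]
      rw [if_pos (S.keptlit_mem_C1 v x)]
    rw [h64]
    rcases (S.mem_C1_iff v).1 hc' with rfl | rfl | ⟨j, rfl⟩ | ⟨y, rfl⟩ | ⟨y, hy, rfl⟩
    · exact le_trans (by norm_num) (S.lb_d (S.d_mem_C1 v))
    · exact le_trans (by norm_num) (S.lb_w (S.w_mem_C1 v))
    · exact le_trans (by norm_num) (S.lb_cl j (S.cl_mem_C1 v j))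
    · rw [S.cnt_lit_eq (S.d_mem_C1 v) _ (S.keptlit_mem_C1 v y)]
      split <;> norm_num
    · rw [S.cnt_lit_eq (S.d_mem_C1 v) _ (by rw [S.vlit_mem_C1_iff v]; exact hy)]
      split <;> norm_num

end STVSetup
namespace STVSetup

variable {α : Type*} [DecidableEq α] {n m : ℕ} (S : STVSetup α n m) (v : Fin n → Bool)

lemma forward (hsat : ∀ j, ∃ ℓ ∈ S.Cl j, v ℓ.1 = ℓ.2) :
    ∃ r, SeqLoser pluralityS S.C S.P r ∧ r.head? = some S.d := by
  classical
  set js := (List.finRange m).mergeSort (fun a b => decide (S.kv v a ≤ S.kv v b)) with hjs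
  have hperm := List.mergeSort_perm (List.finRange m) (fun a b => decide (S.kv v a ≤ S.kv v b))
  have hjnd : js.Nodup := hperm.nodup_iff.2 (List.nodup_finRange m)
  have hjfin : js.toFinset = Finset.univ := by
    ext x
    simp only [List.mem_toFinset, Finset.mem_univ, iff_true]
    exact hperm.mem_iff.2 (List.mem_finRange x)
  have hsort : js.Pairwise (fun a b => S.kv v a ≤ S.kv v b) := by
    have hs := List.pairwise_mergeSort (le := fun a b => decide (S.kv v a ≤ S.kv v b))
      (fun a b c hab hbc => by
        simp only [decide_eq_true_eq] at *
        omega)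
      (fun a b => by
        simp only [Bool.or_eq_true, decide_eq_true_eq]
        omega)
      (List.finRange m)
    exact hs.imp (fun h => of_decide_eq_true h)
  set L4 := (List.finRange n).map (fun x => S.lit (x, !v x)) ++ [S.d] with hL4
  have run4 : Run S.P (S.C4 v Finset.univ) L4 := by
    have := S.stage4 v (List.finRange n) (List.nodup_finRange n)
    rwa [List.toFinset_finRange] at this
  have run3base : Run S.P (S.C3 v ∅) L4 := by
    rw [S.C3_univ_eq_C4_univ v]
    exact run4
  have run3 : Run S.P (S.C3 v Finset.univ) (js.map S.cl ++ L4) := by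
    have := S.stage3 v js hjnd hsort L4 run3base
    rwa [hjfin] at this
  have run2 : Run S.P (S.C1 v ∅) (S.w :: (js.map S.cl ++ L4)) :=
    S.stage2 v hsat _ run3
  have run1 : Run S.P (S.C1 v Finset.univ)
      ((List.finRange n).map (fun x => S.lit (x, v x)) ++
        (S.w :: (js.map S.cl ++ L4))) := by
    have := S.stage1 v (List.finRange n) (List.nodup_finRange n) _ run2
    rwa [List.toFinset_finRange] at this
  set e := (List.finRange n).map (fun x => S.lit (x, v x)) ++
      (S.w :: (js.map S.cl ++ L4)) with he
  have runC : Run S.P S.C e := by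
    rw [S.C_eq_C1_univ v]
    exact run1
  refine ⟨e.reverse, ?_, ?_⟩
  · show SeqLoserSel pluralityS e.reverse.reverse S.C S.P
    rw [List.reverse_reverse]
    unfold Run at runC
    rwa [restrict_self S.hP] at runC
  · rw [List.head?_reverse]
    have hsplit : e = ((List.finRange n).map (fun x => S.lit (x, v x)) ++
        (S.w :: (js.map S.cl ++ (List.finRange n).map (fun x => S.lit (x, !v x))))) ++ [S.d] := by
      rw [he, hL4]
      simp [List.append_assoc]
    rw [hsplit, List.getLast?_concat]

lemma backward (r : List α) (hr : SeqLoser pluralityS S.C S.P r)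
    (hd : r.head? = some S.d) :
    ∃ v : Fin n → Bool, ∀ j, ∃ ℓ ∈ S.Cl j, v ℓ.1 = ℓ.2 := by
  classical
  obtain ⟨r', rfl⟩ : ∃ r', r = S.d :: r' := by
    cases r with
    | nil => simp at hd
    | cons a t =>
      simp only [List.head?_cons, Option.some.injEq] at hd
      exact ⟨t, by rw [hd]⟩
  have hrun : Run S.P S.C ((S.d :: r').reverse) := by
    unfold Run
    rw [restrict_self S.hP]
    exact hr
  have heq : (S.d :: r').reverse = r'.reverse ++ [S.d] := by simp
  rw [heq] at hrun
  have hndfin := run_nodup_toFinset hrun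
  have hwE : S.w ∈ r'.reverse := by
    have hw : S.w ∈ (r'.reverse ++ [S.d]).toFinset := by
      rw [hndfin.2]
      exact S.w_mem_C
    rcases List.mem_append.1 (List.mem_toFinset.1 hw) with h | h
    · exact h
    · simp at h
      exact absurd h.symm S.hdw
  obtain ⟨e₁, e₂, he12⟩ := List.append_of_mem hwE
  have hassoc : (e₁ ++ S.w :: e₂) ++ [S.d] = e₁ ++ (S.w :: (e₂ ++ [S.d])) := by
    simp [List.append_assoc]
  rw [he12, hassoc] at hrun
  have hnd2 : (e₁ ++ (S.w :: (e₂ ++ [S.d]))).Nodup := by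
    have := hndfin.1
    rwa [he12, hassoc] at this
  rw [List.nodup_append] at hnd2
  obtain ⟨-, -, hdisj⟩ := hnd2
  have hrun2 := run_append hrun
  set R := e₁.toFinset with hR
  set C' := S.C \ R with hC'
  have hd' : S.d ∈ C' := by
    rw [hC', Finset.mem_sdiff]
    refine ⟨S.d_mem_C, fun h => ?_⟩
    exact hdisj _ (List.mem_toFinset.1 h) _ (by simp) rfl
  have hw' : S.w ∈ C' := by
    rw [hC', Finset.mem_sdiff]
    refine ⟨S.w_mem_C, fun h => ?_⟩
    exact hdisj _ (List.mem_toFinset.1 h) _ (by simp) rfl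
  have hloser : IsLoser pluralityS C' (restrictProfile C' S.P) S.w :=
    (run_cons.1 hrun2).1
  have hcnts := S.cnt_of_isLoser (show C' ⊆ S.C from Finset.sdiff_subset) hd' hloser
  have hcntd : S.cnt C' S.d = 100 := S.cnt_d_eq hd' hw'
  have hwd := hcnts S.d hd'
  rw [hcntd] at hwd
  have hclR : ∀ j, S.cl j ∈ C' := by
    intro j
    by_contra hj
    have h197 := S.lb_w197 hw' j hj
    omega
  have hvar : ∀ x, S.lit (x, true) ∈ C' ∨ S.lit (x, false) ∈ C' := by
    intro x
    by_contra hx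
    push_neg at hx
    have h159 := S.lb_w159 hw' (x, true) hx.1 (by simpa using hx.2)
    omega
  refine ⟨fun x => decide (S.lit (x, true) ∉ C'), ?_⟩
  intro j
  have hclj := S.cnt_cl_eq hd' j (hclR j)
  have hwle := hcnts (S.cl j) (hclR j)
  have hw99 := S.lb_w hw'
  rw [hclj] at hwle
  have hcard : 0 < ((S.Cl j).filter (fun ℓ => S.lit ℓ ∉ C')).card := by omega
  obtain ⟨ℓ, hℓ⟩ := Finset.card_pos.1 hcard
  rw [Finset.mem_filter] at hℓ
  refine ⟨ℓ, hℓ.1, ?_⟩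
  cases hb : ℓ.2
  · have hℓeq : (ℓ.1, false) = ℓ := by rw [← hb]
    simp only [decide_eq_false_iff_not, not_not]
    rcases hvar ℓ.1 with h | h
    · exact h
    · rw [hℓeq] at h
      exact absurd h hℓ.2
  · have hℓeq : (ℓ.1, true) = ℓ := by rw [← hb]
    simp only [decide_eq_true_eq]
    rw [hℓeq]
    exact hℓ.2

end STVSetup
/-- correctness of the STV reduction from satisfiability.
Clauses are finsets of literals; a literal is a pair `(x, b) : Fin n × Bool`
(`b = true` meaning the positive literal of variable `x`), and the negation of
`ℓ = (x, b)` is `(x, !b)`.  Given the described profile over the candidate set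
`{d, w} ∪ {clause candidates} ∪ {literal candidates}`, the designated candidate `d`
is ranked first in some ranking selected by Sequential-Plurality-Loser (STV)
iff the formula is satisfiable. -/
theorem stv_winner_iff_satisfiable {α : Type*} [DecidableEq α] {n m : ℕ}
    (Cl : Fin m → Finset (Fin n × Bool))
    (hCl3 : ∀ j, (Cl j).card ≤ 3)
    (hTwice : ∀ ℓ : Fin n × Bool, (Finset.univ.filter fun j => ℓ ∈ Cl j).card = 2)
    (d w : α) (cl : Fin m → α) (lit : Fin n × Bool → α)
    (hdw : d ≠ w)
    (hclinj : Function.Injective cl) (hlitinj : Function.Injective lit)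
    (hcld : ∀ j, cl j ≠ d) (hclw : ∀ j, cl j ≠ w)
    (hlitd : ∀ ℓ, lit ℓ ≠ d) (hlitw : ∀ ℓ, lit ℓ ≠ w)
    (hcllit : ∀ j ℓ, cl j ≠ lit ℓ)
    (C : Finset α)
    (hC : C = insert d (insert w
      (Finset.univ.image cl ∪ Finset.univ.image lit)))
    (P : List (List α)) (hP : IsProfile C P)
    -- every voter has one of the five prescribed forms (arbitrary completions `t`):
    (hforms : ∀ r ∈ P,
      (∃ t, r = d :: t) ∨
      (∃ t, r = w :: d :: t) ∨
      (∃ (j : Fin m) (t : List α), r = cl j :: w :: d :: t) ∨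
      (∃ (ℓ : Fin n × Bool) (t : List α),
        r = lit ℓ :: lit (ℓ.1, !ℓ.2) :: w :: d :: t) ∨
      (∃ (ℓ : Fin n × Bool) (j : Fin m) (t : List α),
        ℓ ∈ Cl j ∧ r = lit ℓ :: cl j :: w :: d :: t))
    -- 100 voters `d ≻ ⋯`:
    (h1 : P.countP (fun r => decide (r.take 1 = [d])) = 100)
    -- 99 voters `w ≻ d ≻ ⋯`:
    (h2 : P.countP (fun r => decide (r.take 2 = [w, d])) = 99)
    -- 98 voters `c_j ≻ w ≻ d ≻ ⋯` for each clause `j`: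
    (h3 : ∀ j : Fin m, P.countP (fun r => decide (r.take 3 = [cl j, w, d])) = 98)
    -- 60 voters `ℓ ≻ ℓ̄ ≻ w ≻ d ≻ ⋯` for each literal `ℓ`:
    (h4 : ∀ ℓ : Fin n × Bool,
      P.countP (fun r => decide (r.take 4 = [lit ℓ, lit (ℓ.1, !ℓ.2), w, d])) = 60)
    -- 2 voters `ℓ ≻ c_j ≻ w ≻ d ≻ ⋯` for each literal `ℓ` and clause `j` containing `ℓ`:
    (h5 : ∀ (ℓ : Fin n × Bool) (j : Fin m), ℓ ∈ Cl j →
      P.countP (fun r => decide (r.take 4 = [lit ℓ, cl j, w, d])) = 2) :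
    (∃ r, SeqLoser pluralityS C P r ∧ r.head? = some d) ↔
      ∃ v : Fin n → Bool, ∀ j : Fin m, ∃ ℓ ∈ Cl j, v ℓ.1 = ℓ.2 := by
  let S : STVSetup α n m :=
    ⟨Cl, hCl3, hTwice, d, w, cl, lit, hdw, hclinj, hlitinj, hcld, hclw, hlitd, hlitw,
      hcllit, C, hC, P, hP, hforms, h1, h2, h3, h4, h5⟩
  constructor
  · rintro ⟨r, hr, hhead⟩
    exact S.backward r hr hhead
  · rintro ⟨v, hv⟩
    exact S.forward v hv
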